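/- arXiv:2410.10250 — 3 statements merged into one kernel-verified Lean document; each statement's English description precedes it below -/
import Mathlib

section
/- For \alpha\in(1,2), the proxy density \bar p_\alpha satisfies an approximate convolution property: there exists a constant \mathfrak{c}\ge 1 depending only on d,\alpha such that for all u,v>0 and x,y\in\mathbb{R}^d, \int_{\mathbb{R}^d} \bar p_\alpha(u,z-x)\,\bar p_\alpha(v,y-z)\,dz \le \mathfrak{c}\,\bar p_\alpha(u+v, y-x). -/
open MeasureTheory Real

private lemma aux1 {β r : ℝ} (hβ : 0 ≤ β) (hr : 0 ≤ r) :
    (1 + r) ^ β ≤ 2 ^ β * (1 + r ^ β) := by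
  have h2 : (0:ℝ) < 2 ^ β := Real.rpow_pos_of_pos two_pos β
  have hrβ : 0 ≤ r ^ β := Real.rpow_nonneg hr β
  rcases le_total r 1 with h | h
  · calc (1 + r) ^ β ≤ 2 ^ β := Real.rpow_le_rpow (by linarith) (by linarith) hβ
      _ = 2 ^ β * 1 := (mul_one _).symm
      _ ≤ 2 ^ β * (1 + r ^ β) := by nlinarith
  · calc (1 + r) ^ β ≤ (2 * r) ^ β := Real.rpow_le_rpow (by linarith) (by linarith) hβ
      _ = 2 ^ β * r ^ β := Real.mul_rpow (by norm_num) hr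
      _ ≤ 2 ^ β * (1 + r ^ β) := by nlinarith

private lemma aux2 {β r : ℝ} (hβ : 0 ≤ β) (hr : 0 ≤ r) :
    1 + r ^ β ≤ 2 * (1 + r) ^ β := by
  have h1 : (1:ℝ) ≤ (1 + r) ^ β := Real.one_le_rpow (by linarith) hβ
  have h2 : r ^ β ≤ (1 + r) ^ β := Real.rpow_le_rpow hr (by linarith) hβ
  linarith

private lemma aux3 {γ u v : ℝ} (hγ : 0 ≤ γ) (hu : 0 ≤ u) (hv : 0 ≤ v) :
    (u + v) ^ γ ≤ 2 ^ γ * (u ^ γ + v ^ γ) := by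
  have huγ : 0 ≤ u ^ γ := Real.rpow_nonneg hu γ
  have hvγ : 0 ≤ v ^ γ := Real.rpow_nonneg hv γ
  have h2 : (0:ℝ) < 2 ^ γ := Real.rpow_pos_of_pos two_pos γ
  rcases le_total u v with h | h
  · calc (u + v) ^ γ ≤ (2 * v) ^ γ := Real.rpow_le_rpow (by linarith) (by linarith) hγ
      _ = 2 ^ γ * v ^ γ := Real.mul_rpow (by norm_num) hv
      _ ≤ 2 ^ γ * (u ^ γ + v ^ γ) := by nlinarith
  · calc (u + v) ^ γ ≤ (2 * u) ^ γ := Real.rpow_le_rpow (by linarith) (by linarith) hγ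
      _ = 2 ^ γ * u ^ γ := Real.mul_rpow (by norm_num) hu
      _ ≤ 2 ^ γ * (u ^ γ + v ^ γ) := by nlinarith

private lemma aux4 (γ β α : ℝ) (hα : 0 < α) (hrel : γ - 1 / α * β = -1)
    {t r : ℝ} (ht : 0 < t) (hr : 0 ≤ r) :
    t ^ γ * (r / t ^ (1 / α)) ^ β = r ^ β / t := by
  have h1 : (r / t ^ (1 / α)) ^ β = r ^ β / t ^ (1 / α * β) := by
    rw [Real.div_rpow hr (Real.rpow_nonneg ht.le _), ← Real.rpow_mul ht.le]
  have h2 : t ^ γ / t ^ (1 / α * β) = t⁻¹ := by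
    rw [← Real.rpow_sub ht, hrel, Real.rpow_neg_one]
  calc t ^ γ * (r / t ^ (1 / α)) ^ β = r ^ β * (t ^ γ / t ^ (1 / α * β)) := by
        rw [h1]; ring
    _ = r ^ β * t⁻¹ := by rw [h2]
    _ = r ^ β / t := (div_eq_mul_inv _ _).symm

/-- Core estimate: `G (u+v) (A+B) ≤ K (G u A + G v B)` where
`G s r = s ^ γ * (1 + r / s ^ (1/α)) ^ β`. -/
private lemma conv_core (γ β α : ℝ) (hγ : 0 < γ) (hβ : 0 < β) (hα : 0 < α)
    (hrel : γ - 1 / α * β = -1)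
    {u v A B : ℝ} (hu : 0 < u) (hv : 0 < v) (hA : 0 ≤ A) (hB : 0 ≤ B) :
    (u + v) ^ γ * (1 + (A + B) / (u + v) ^ (1 / α)) ^ β ≤
      2 ^ (β + 1) * (2 ^ γ + 2 ^ β) *
        (u ^ γ * (1 + A / u ^ (1 / α)) ^ β + v ^ γ * (1 + B / v ^ (1 / α)) ^ β) := by
  set t := u + v with ht_def
  have ht : 0 < t := by positivity
  have hW : 0 ≤ A + B := by linarith
  have h2γ : (0:ℝ) < 2 ^ γ := Real.rpow_pos_of_pos two_pos γ
  have h2β : (0:ℝ) < 2 ^ β := Real.rpow_pos_of_pos two_pos β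
  have s2 : t ^ γ * (1 + (A + B) / t ^ (1 / α)) ^ β
      ≤ 2 ^ β * (t ^ γ + (A + B) ^ β / t) := by
    have s1 : (1 + (A + B) / t ^ (1 / α)) ^ β
        ≤ 2 ^ β * (1 + ((A + B) / t ^ (1 / α)) ^ β) :=
      aux1 hβ.le (by positivity)
    calc t ^ γ * (1 + (A + B) / t ^ (1 / α)) ^ β
        ≤ t ^ γ * (2 ^ β * (1 + ((A + B) / t ^ (1 / α)) ^ β)) :=
          mul_le_mul_of_nonneg_left s1 (Real.rpow_nonneg ht.le γ)
      _ = 2 ^ β * (t ^ γ + t ^ γ * ((A + B) / t ^ (1 / α)) ^ β) := by ring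
      _ = 2 ^ β * (t ^ γ + (A + B) ^ β / t) := by rw [aux4 γ β α hα hrel ht hW]
  have s3 : t ^ γ ≤ 2 ^ γ * (u ^ γ + v ^ γ) := aux3 hγ.le hu.le hv.le
  have s5 : (A + B) ^ β / t ≤ 2 ^ β * (A ^ β / u + B ^ β / v) := by
    have s4 : (A + B) ^ β ≤ 2 ^ β * (A ^ β + B ^ β) := aux3 hβ.le hA hB
    have hAu : A ^ β / t ≤ A ^ β / u := by
      gcongr
      · linarith
    have hBv : B ^ β / t ≤ B ^ β / v := by
      gcongr
      · linarith
    calc (A + B) ^ β / t ≤ (2 ^ β * (A ^ β + B ^ β)) / t := by gcongr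
      _ = 2 ^ β * (A ^ β / t + B ^ β / t) := by ring
      _ ≤ 2 ^ β * (A ^ β / u + B ^ β / v) := by
          apply mul_le_mul_of_nonneg_left _ h2β.le
          linarith
  have s6u : u ^ γ + A ^ β / u ≤ 2 * (u ^ γ * (1 + A / u ^ (1 / α)) ^ β) := by
    have e := aux4 γ β α hα hrel hu hA
    have h := aux2 hβ.le (show (0:ℝ) ≤ A / u ^ (1 / α) by positivity)
    calc u ^ γ + A ^ β / u = u ^ γ * (1 + (A / u ^ (1 / α)) ^ β) := by
          rw [mul_add, mul_one, e]
      _ ≤ u ^ γ * (2 * (1 + A / u ^ (1 / α)) ^ β) :=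
          mul_le_mul_of_nonneg_left h (Real.rpow_nonneg hu.le γ)
      _ = 2 * (u ^ γ * (1 + A / u ^ (1 / α)) ^ β) := by ring
  have s6v : v ^ γ + B ^ β / v ≤ 2 * (v ^ γ * (1 + B / v ^ (1 / α)) ^ β) := by
    have e := aux4 γ β α hα hrel hv hB
    have h := aux2 hβ.le (show (0:ℝ) ≤ B / v ^ (1 / α) by positivity)
    calc v ^ γ + B ^ β / v = v ^ γ * (1 + (B / v ^ (1 / α)) ^ β) := by
          rw [mul_add, mul_one, e]
      _ ≤ v ^ γ * (2 * (1 + B / v ^ (1 / α)) ^ β) :=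
          mul_le_mul_of_nonneg_left h (Real.rpow_nonneg hv.le γ)
      _ = 2 * (v ^ γ * (1 + B / v ^ (1 / α)) ^ β) := by ring
  have hX : 0 ≤ u ^ γ + v ^ γ := by positivity
  have hY : 0 ≤ A ^ β / u + B ^ β / v := by positivity
  calc t ^ γ * (1 + (A + B) / t ^ (1 / α)) ^ β
      ≤ 2 ^ β * (t ^ γ + (A + B) ^ β / t) := s2
    _ ≤ 2 ^ β * (2 ^ γ * (u ^ γ + v ^ γ) + 2 ^ β * (A ^ β / u + B ^ β / v)) :=
        mul_le_mul_of_nonneg_left (add_le_add s3 s5) h2β.le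
    _ ≤ 2 ^ β * ((2 ^ γ + 2 ^ β) * ((u ^ γ + A ^ β / u) + (v ^ γ + B ^ β / v))) := by
        apply mul_le_mul_of_nonneg_left _ h2β.le
        nlinarith [mul_nonneg h2β.le hX, mul_nonneg h2γ.le hY]
    _ ≤ 2 ^ β * ((2 ^ γ + 2 ^ β) *
          (2 * (u ^ γ * (1 + A / u ^ (1 / α)) ^ β) +
           2 * (v ^ γ * (1 + B / v ^ (1 / α)) ^ β))) := by
        apply mul_le_mul_of_nonneg_left _ h2β.le
        apply mul_le_mul_of_nonneg_left (add_le_add s6u s6v) (by positivity)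
    _ = 2 ^ (β + 1) * (2 ^ γ + 2 ^ β) *
          (u ^ γ * (1 + A / u ^ (1 / α)) ^ β + v ^ γ * (1 + B / v ^ (1 / α)) ^ β) := by
        rw [Real.rpow_add two_pos, Real.rpow_one]; ring

/-- Approximate convolution property for the stable proxy density `p̄_α`. -/
theorem stmt2 (d : ℕ) (hd : 1 ≤ d) (α : ℝ) (hα1 : 1 < α) (hα2 : α < 2)
    (Cα : ℝ) (hCα : 0 < Cα)
    (p : ℝ → EuclideanSpace ℝ (Fin d) → ℝ)
    (hp : ∀ v : ℝ, 0 < v → ∀ z, p v z =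
      Cα * v ^ (-(d : ℝ) / α) * (1 + ‖z‖ / v ^ (1 / α)) ^ (-((d : ℝ) + α)))
    (hnorm : ∀ v : ℝ, 0 < v → (∫ z, p v z) = 1) :
    ∃ 𝔠 : ℝ, 1 ≤ 𝔠 ∧ ∀ u v : ℝ, 0 < u → 0 < v →
      ∀ x y : EuclideanSpace ℝ (Fin d),
        (∫ z, p u (z - x) * p v (y - z)) ≤ 𝔠 * p (u + v) (y - x) := by
  have hα0 : (0:ℝ) < α := by linarith
  set γ : ℝ := (d : ℝ) / α with hγ_def
  set β : ℝ := (d : ℝ) + α with hβ_def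
  have hdpos : (0:ℝ) < d := by exact_mod_cast hd
  have hγ : 0 < γ := by positivity
  have hβ : 0 < β := by positivity
  have hrel : γ - 1 / α * β = -1 := by
    field_simp [hγ_def, hβ_def]
    rw [hγ_def, div_mul_cancel₀ _ hα0.ne', hβ_def]; ring
  set K : ℝ := 2 ^ (β + 1) * (2 ^ γ + 2 ^ β) with hK_def
  have h2γ : (0:ℝ) < 2 ^ γ := Real.rpow_pos_of_pos two_pos γ
  have h2β : (0:ℝ) < 2 ^ β := Real.rpow_pos_of_pos two_pos β
  have h1K : (1:ℝ) ≤ K := by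
    have h1 : (1:ℝ) ≤ 2 ^ (β + 1) := Real.one_le_rpow one_le_two (by linarith)
    have h2 : (1:ℝ) ≤ 2 ^ γ := Real.one_le_rpow one_le_two hγ.le
    nlinarith
  -- positivity of p
  have ppos : ∀ v : ℝ, 0 < v → ∀ z, 0 < p v z := by
    intro v hv z
    rw [hp v hv z]
    have h1 : (0:ℝ) < v ^ (-(d:ℝ)/α) := Real.rpow_pos_of_pos hv _
    have h2 : (0:ℝ) < 1 + ‖z‖ / v ^ (1/α) := by positivity
    have h3 : (0:ℝ) < (1 + ‖z‖ / v ^ (1/α)) ^ (-((d:ℝ)+α)) := Real.rpow_pos_of_pos h2 _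
    positivity
  -- p equals Cα / G where G is the core quantity
  have pform : ∀ v : ℝ, 0 < v → ∀ z : EuclideanSpace ℝ (Fin d),
      p v z = Cα / (v ^ γ * (1 + ‖z‖ / v ^ (1/α)) ^ β) := by
    intro v hv z
    rw [hp v hv z]
    have h2 : (0:ℝ) ≤ 1 + ‖z‖ / v ^ (1/α) := by positivity
    rw [show -(d:ℝ)/α = -γ by rw [hγ_def]; ring,
        show -((d:ℝ)+α) = -β by rw [hβ_def],
        Real.rpow_neg hv.le, Real.rpow_neg h2]
    rw [mul_assoc, ← mul_inv, ← div_eq_mul_inv]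
  -- integrability of p v
  have hint : ∀ v : ℝ, 0 < v → Integrable (p v) := by
    intro v hv
    by_contra h
    have h0 := integral_undef h
    rw [hnorm v hv] at h0
    norm_num at h0
  refine ⟨2 * K, by linarith, ?_⟩
  intro u v hu hv x y
  have ht : 0 < u + v := by linarith
  -- pointwise key inequality
  have key : ∀ z : EuclideanSpace ℝ (Fin d),
      p u (z - x) * p v (y - z) ≤ K * p (u + v) (y - x) * (p u (z - x) + p v (y - z)) := by
    intro z
    set A := ‖z - x‖ with hA_def
    set B := ‖y - z‖ with hB_def
    set W := ‖y - x‖ with hW_def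
    have hA : 0 ≤ A := norm_nonneg _
    have hB : 0 ≤ B := norm_nonneg _
    have hWAB : W ≤ A + B := by
      have : y - x = (z - x) + (y - z) := by abel
      rw [hW_def, this]
      exact norm_add_le _ _
    set Gu := u ^ γ * (1 + A / u ^ (1/α)) ^ β with hGu_def
    set Gv := v ^ γ * (1 + B / v ^ (1/α)) ^ β with hGv_def
    set Gt := (u + v) ^ γ * (1 + W / (u + v) ^ (1/α)) ^ β with hGt_def
    have hGu : 0 < Gu := by
      have : (0:ℝ) < 1 + A / u ^ (1/α) := by positivity
      positivity
    have hGv : 0 < Gv := by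
      have : (0:ℝ) < 1 + B / v ^ (1/α) := by positivity
      positivity
    have hGt : 0 < Gt := by
      have : (0:ℝ) < 1 + W / (u + v) ^ (1/α) := by positivity
      positivity
    have hG : Gt ≤ K * (Gu + Gv) := by
      have hmono : Gt ≤ (u + v) ^ γ * (1 + (A + B) / (u + v) ^ (1/α)) ^ β := by
        rw [hGt_def]
        apply mul_le_mul_of_nonneg_left _ (Real.rpow_nonneg ht.le γ)
        apply Real.rpow_le_rpow (by positivity) _ hβ.le
        have h : W / (u + v) ^ (1/α) ≤ (A + B) / (u + v) ^ (1/α) := by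
          gcongr
        linarith
      calc Gt ≤ (u + v) ^ γ * (1 + (A + B) / (u + v) ^ (1/α)) ^ β := hmono
        _ ≤ K * (Gu + Gv) := conv_core γ β α hγ hβ hα0 hrel hu hv hA hB
    have eu : p u (z - x) = Cα / Gu := pform u hu (z - x)
    have ev : p v (y - z) = Cα / Gv := pform v hv (y - z)
    have et : p (u + v) (y - x) = Cα / Gt := pform (u + v) ht (y - x)
    rw [eu, ev, et]
    rw [← sub_nonneg]
    have heq : K * (Cα / Gt) * (Cα / Gu + Cα / Gv) - Cα / Gu * (Cα / Gv)
        = Cα ^ 2 * ((K * (Gu + Gv) - Gt) / (Gt * (Gu * Gv))) := by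
      field_simp
      ring
    rw [heq]
    apply mul_nonneg (by positivity)
    apply div_nonneg (by linarith) (by positivity)
  -- integrability of translates
  have hint1 : Integrable (fun z => p u (z - x)) := (hint u hu).comp_sub_right x
  have hint2 : Integrable (fun z => p v (y - z)) := (hint v hv).comp_sub_left y
  have hI1 : (∫ z, p u (z - x)) = 1 := by
    rw [integral_sub_right_eq_self (p u) x]
    exact hnorm u hu
  have hI2 : (∫ z, p v (y - z)) = 1 := by
    rw [integral_sub_left_eq_self (p v) volume y]
    exact hnorm v hv
  have hpt : 0 < p (u + v) (y - x) := ppos (u + v) ht (y - x)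
  have hmono : (∫ z, p u (z - x) * p v (y - z))
      ≤ ∫ z, K * p (u + v) (y - x) * (p u (z - x) + p v (y - z)) := by
    apply integral_mono_of_nonneg
    · filter_upwards with z
      exact mul_nonneg (ppos u hu _).le (ppos v hv _).le
    · exact (hint1.add hint2).const_mul _
    · filter_upwards with z
      exact key z
  have heval : (∫ z, K * p (u + v) (y - x) * (p u (z - x) + p v (y - z)))
      = K * p (u + v) (y - x) * 2 := by
    rw [integral_const_mul, integral_add hint1 hint2, hI1, hI2]
    norm_num
  calc (∫ z, p u (z - x) * p v (y - z))
      ≤ K * p (u + v) (y - x) * 2 := by rw [← heval]; exact hmono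
    _ = 2 * K * p (u + v) (y - x) := by ring
end

section
/- Discrete Gr\"onwall–Volterra lemma with weak singularity: let \alpha>1, let f:[0,T]\to[0,\infty) be bounded and measurable, A\ge0, h\in(0,T], and suppose for all t\in[h,T]: f(t) \le A + C\int_h^t f(\tau_s^h)\,(t-\tau_s^h)^{-1/\alpha}\,ds, where \tau_s^h=h\lfloor s/h\rfloor. Then there exists a constant K depending only on C, \alpha, T (not on h or A) such that f(t)\le K A for all t\in[h,T]. -/
open MeasureTheory intervalIntegral Real

lemma step_piece {a b c : ℝ} (hab : a ≤ b) {g : ℝ → ℝ}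
    (hg : ∀ s ∈ Set.Ioo a b, g s = c) :
    IntervalIntegrable g volume a b ∧ (∫ s in a..b, g s) = c * (b - a) := by
  have hae : g =ᵐ[volume.restrict (Set.Ioc a b)] fun _ => c := by
    have h1 : ∀ᵐ s ∂(volume.restrict (Set.Ioc a b)), s ∈ Set.Ioc a b :=
      ae_restrict_mem measurableSet_Ioc
    have h2 : ∀ᵐ s ∂(volume.restrict (Set.Ioc a b)), s ≠ b := by
      refine ae_restrict_of_ae ?_
      rw [MeasureTheory.ae_iff]
      simp only [not_not, Set.setOf_eq_eq_singleton]
      exact measure_singleton b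
    filter_upwards [h1, h2] with s hs hsne
    exact hg s ⟨hs.1, lt_of_le_of_ne hs.2 hsne⟩
  have hint : IntegrableOn g (Set.Ioc a b) volume :=
    (integrableOn_const measure_Ioc_lt_top.ne).congr hae.symm
  constructor
  · exact (intervalIntegrable_iff_integrableOn_Ioc_of_le hab).2 hint
  · rw [intervalIntegral.integral_of_le hab, MeasureTheory.integral_congr_ae hae]
    simp [Real.volume_Ioc, ENNReal.toReal_ofReal (sub_nonneg.2 hab), mul_comm, hab]

lemma grid_sum {h : ℝ} (hh : 0 < h) (m : ℕ) (hm : 1 ≤ m) {g : ℝ → ℝ} {c : ℕ → ℝ}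
    (hg : ∀ k : ℕ, 1 ≤ k → k < m →
      ∀ s ∈ Set.Ioo ((k : ℝ) * h) (((k : ℝ) + 1) * h), g s = c k) :
    (∫ s in h..((m : ℝ) * h), g s) = ∑ k ∈ Finset.range (m - 1), c (k + 1) * h := by
  set A : ℕ → ℝ := fun i => ((i : ℝ) + 1) * h with hA
  have key : ∀ k, k < m - 1 → IntervalIntegrable g volume (A k) (A (k + 1)) ∧
      (∫ s in A k..A (k + 1), g s) = c (k + 1) * h := by
    intro k hk
    have hle : A k ≤ A (k + 1) := by
      simp only [hA]
      push_cast
      nlinarith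
    have hgc : ∀ s ∈ Set.Ioo (A k) (A (k + 1)), g s = c (k + 1) := by
      intro s hs
      refine hg (k + 1) (by omega) (by omega) s ?_
      · simp only [hA] at hs
        push_cast
        push_cast at hs
        constructor <;> [linarith [hs.1]; linarith [hs.2]]
    obtain ⟨hi, hv⟩ := step_piece hle hgc
    refine ⟨hi, ?_⟩
    rw [hv]
    simp only [hA]
    push_cast
    ring
  have hsum := intervalIntegral.sum_integral_adjacent_intervals
    (f := g) (μ := volume) (a := A) (n := m - 1) (fun k hk => (key k hk).1)
  have hA0 : A 0 = h := by simp [hA]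
  have hAm : A (m - 1) = (m : ℝ) * h := by
    simp only [hA]
    have : ((m - 1 : ℕ) : ℝ) = (m : ℝ) - 1 := by
      push_cast [Nat.cast_sub hm]
      ring
    rw [this]; ring
  rw [hA0, hAm] at hsum
  rw [← hsum]
  exact Finset.sum_congr rfl fun k hk => (key k (Finset.mem_range.1 hk)).2

lemma sum_rpow_le {h e : ℝ} (hh : 0 < h) (he : -1 < e) (he2 : e < 0) (r : ℕ) :
    ∑ j ∈ Finset.range r, (((j : ℝ) + 1) * h) ^ e * h ≤ ((r : ℝ) * h) ^ (e + 1) / (e + 1) := by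
  have hp : 0 < e + 1 := by linarith
  have piece : ∀ j : ℕ, (((j : ℝ) + 1) * h) ^ e * h ≤
      ∫ x in ((j : ℝ) * h)..(((j : ℝ) + 1) * h), x ^ e := by
    intro j
    have hj0 : (0 : ℝ) ≤ (j : ℝ) * h := by positivity
    have hj2 : (j : ℝ) * h ≤ ((j : ℝ) + 1) * h := by nlinarith
    rw [intervalIntegral.integral_of_le hj2]
    have hconst : (((j : ℝ) + 1) * h) ^ e * h =
        ∫ _x in Set.Ioc ((j : ℝ) * h) (((j : ℝ) + 1) * h), (((j : ℝ) + 1) * h) ^ e := by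
      rw [MeasureTheory.setIntegral_const]
      rw [measureReal_def, Real.volume_Ioc, ENNReal.toReal_ofReal (by linarith)]
      rw [smul_eq_mul]
      ring
    rw [hconst]
    refine MeasureTheory.setIntegral_mono_on ?_ ?_ measurableSet_Ioc ?_
    · exact integrableOn_const measure_Ioc_lt_top.ne
    · exact (intervalIntegrable_iff_integrableOn_Ioc_of_le hj2).1
        (intervalIntegral.intervalIntegrable_rpow' he)
    · intro x hx
      exact Real.rpow_le_rpow_of_nonpos (lt_of_le_of_lt hj0 hx.1) hx.2 he2.le
  have hsum : ∑ j ∈ Finset.range r, ∫ x in ((j : ℝ) * h)..(((j : ℝ) + 1) * h), x ^ e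
      = ∫ x in (0 : ℝ)..((r : ℝ) * h), x ^ e := by
    have := intervalIntegral.sum_integral_adjacent_intervals
      (f := fun x : ℝ => x ^ e) (μ := volume) (a := fun i : ℕ => (i : ℝ) * h) (n := r)
      (fun k _ => intervalIntegral.intervalIntegrable_rpow' he)
    simp only [Nat.cast_zero, zero_mul] at this
    rw [← this]
    exact Finset.sum_congr rfl fun k _ => by push_cast; ring_nf
  have hval : (∫ x in (0 : ℝ)..((r : ℝ) * h), x ^ e) = ((r : ℝ) * h) ^ (e + 1) / (e + 1) := by
    rw [integral_rpow (Or.inl he), Real.zero_rpow (by linarith : e + 1 ≠ 0)]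
    ring
  calc ∑ j ∈ Finset.range r, (((j : ℝ) + 1) * h) ^ e * h
      ≤ ∑ j ∈ Finset.range r, ∫ x in ((j : ℝ) * h)..(((j : ℝ) + 1) * h), x ^ e :=
        Finset.sum_le_sum fun j _ => piece j
    _ = ((r : ℝ) * h) ^ (e + 1) / (e + 1) := by rw [hsum, hval]

set_option maxHeartbeats 1000000 in
/-- Discrete Grönwall–Volterra lemma with a weakly singular kernel. -/
theorem stmt15 (T α C : ℝ) (hT : 0 < T) (hα1 : 1 < α) (hα2 : α ≤ 2) (hC : 0 < C) :
    ∃ K : ℝ, 0 < K ∧ ∀ n : ℕ, 0 < n → ∀ h : ℝ, h = T / n →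
      ∀ f : ℝ → ℝ, (∀ t, 0 ≤ f t) → Measurable f →
        (∃ M : ℝ, ∀ t ∈ Set.Icc (0 : ℝ) T, f t ≤ M) →
        ∀ A : ℝ, 0 ≤ A →
          (∀ t ∈ Set.Icc h T,
            f t ≤ A + C * ∫ s in h..t,
              f (h * (⌊s / h⌋ : ℝ)) * (t - h * (⌊s / h⌋ : ℝ)) ^ (-(1 : ℝ) / α)) →
          ∀ t ∈ Set.Icc h T, f t ≤ K * A := by
  have hα0 : 0 < α := by linarith
  have hia : 1 / α < 1 := by rw [div_lt_one hα0]; exact hα1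
  have hia0 : 0 < 1 / α := by positivity
  set e : ℝ := -(1 : ℝ) / α with he_def
  have hee : e = -(1 / α) := by rw [he_def, neg_div]
  have he1 : -1 < e := by rw [hee]; linarith
  have he2 : e < 0 := by rw [hee]; linarith
  have hp : 0 < e + 1 := by linarith
  set δ : ℝ := ((e + 1) / (2 * C)) ^ (1 / (e + 1)) with hδ_def
  have hδ : 0 < δ := Real.rpow_pos_of_pos (by positivity) _
  have hδpow : δ ^ (e + 1) = (e + 1) / (2 * C) := by
    rw [hδ_def, ← Real.rpow_mul (by positivity), one_div_mul_cancel hp.ne', Real.rpow_one]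
  have hδhalf : C * (δ ^ (e + 1) / (e + 1)) = 1 / 2 := by
    rw [hδpow]
    field_simp
  set B : ℝ := C * T * δ ^ e with hB_def
  have hδe0 : 0 ≤ δ ^ e := Real.rpow_nonneg hδ.le e
  have hB0 : 0 ≤ B := by
    rw [hB_def]; positivity
  set E : ℝ := 2 + 2 * B with hE_def
  have hE1 : 1 ≤ E := by rw [hE_def]; linarith
  have hE0 : 0 < E := by linarith
  set N : ℕ := Nat.floor (T / δ) + 1 with hN_def
  set K₀ : ℝ := E ^ N with hK₀_def
  have hK₀1 : 1 ≤ K₀ := one_le_pow₀ hE1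
  have hK₀0 : 0 < K₀ := lt_of_lt_of_le one_pos hK₀1
  have hTp0 : 0 < T ^ (e + 1) := Real.rpow_pos_of_pos hT _
  have hKpos : 0 < 1 + C * K₀ * (T ^ (e + 1) / (e + 1)) := by
    have h1 : 0 ≤ C * K₀ * (T ^ (e + 1) / (e + 1)) :=
      mul_nonneg (mul_nonneg hC.le hK₀0.le) (div_nonneg hTp0.le hp.le)
    linarith
  clear_value e δ B E N K₀
  refine ⟨1 + C * K₀ * (T ^ (e + 1) / (e + 1)), hKpos, ?_⟩
  intro n hn h hh f hf0 _ _ A hA H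
  have hn1 : (1 : ℝ) ≤ (n : ℝ) := by exact_mod_cast hn
  have hh0 : 0 < h := by rw [hh]; positivity
  have hnh : (n : ℝ) * h = T := by
    rw [hh]
    field_simp
  set a : ℕ → ℝ := fun k => f (h * (k : ℝ)) with ha_def
  have ha0 : ∀ k, 0 ≤ a k := fun k => hf0 _
  set W : ℕ → ℝ := fun j => C * (((j : ℝ) * h) ^ e * h) with hW_def
  have hW0 : ∀ j, 0 ≤ W j := by
    intro j
    have h1 : (0 : ℝ) ≤ ((j : ℝ) * h) ^ e := Real.rpow_nonneg (by positivity) e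
    exact mul_nonneg hC.le (mul_nonneg h1 hh0.le)
  set r : ℕ := Nat.floor (δ / h) with hr_def
  have hrh : (r : ℝ) * h ≤ δ := by
    have h1 : (r : ℝ) ≤ δ / h := Nat.floor_le (le_of_lt (div_pos hδ hh0))
    calc (r : ℝ) * h ≤ (δ / h) * h := mul_le_mul_of_nonneg_right h1 hh0.le
      _ = δ := by field_simp
  have hrh2 : δ < ((r : ℝ) + 1) * h := by
    have h1 : δ / h < (r : ℝ) + 1 := Nat.lt_floor_add_one (δ / h)
    calc δ = (δ / h) * h := by field_simp
      _ < ((r : ℝ) + 1) * h := mul_lt_mul_of_pos_right h1 hh0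
  clear_value r
  set Q : ℕ → ℕ := fun m => (m + r) / (r + 1) with hQ_def
  have hQ1 : ∀ m, 1 ≤ m → 1 ≤ Q m := by
    intro m hm
    simp only [hQ_def]
    rw [Nat.one_le_div_iff (Nat.succ_pos r)]
    omega
  have hQmono : ∀ m₁ m₂, m₁ ≤ m₂ → Q m₁ ≤ Q m₂ := by
    intro m₁ m₂ hm
    exact Nat.div_le_div_right (by omega)
  have hQsub : ∀ m, 1 ≤ m → Q m = (m - 1) / (r + 1) + 1 := by
    intro m hm
    simp only [hQ_def]
    rw [show m + r = (m - 1) + (r + 1) by omega, Nat.add_div_right _ (Nat.succ_pos r)]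
  -- the grid inequality
  have hgrid : ∀ m : ℕ, 1 ≤ m → m ≤ n →
      a m ≤ A + ∑ j ∈ Finset.range (m - 1), a (m - 1 - j) * W (j + 1) := by
    intro m hm1 hmn
    have hm1' : (1 : ℝ) ≤ (m : ℝ) := by exact_mod_cast hm1
    have hmn' : (m : ℝ) ≤ (n : ℝ) := by exact_mod_cast hmn
    have hmem : h * (m : ℝ) ∈ Set.Icc h T := by
      constructor
      · have h1 : (1 : ℝ) * h ≤ (m : ℝ) * h := mul_le_mul_of_nonneg_right hm1' hh0.le
        linarith
      · calc h * (m : ℝ) = (m : ℝ) * h := mul_comm _ _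
          _ ≤ (n : ℝ) * h := mul_le_mul_of_nonneg_right hmn' hh0.le
          _ = T := hnh
    have hH := H _ hmem
    have hgc : ∀ k : ℕ, 1 ≤ k → k < m →
        ∀ s ∈ Set.Ioo ((k : ℝ) * h) (((k : ℝ) + 1) * h),
          f (h * (⌊s / h⌋ : ℝ)) * (h * (m : ℝ) - h * (⌊s / h⌋ : ℝ)) ^ e
            = a k * (((m : ℝ) - (k : ℝ)) * h) ^ e := by
      intro k hk1 hkm s hs
      have hfl : ⌊s / h⌋ = (k : ℤ) := by
        rw [Int.floor_eq_iff]
        constructor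
        · push_cast
          rw [le_div_iff₀ hh0]
          exact le_of_lt hs.1
        · push_cast
          rw [div_lt_iff₀ hh0]
          exact hs.2
      rw [hfl]
      push_cast
      rw [show h * (m : ℝ) - h * (k : ℝ) = ((m : ℝ) - (k : ℝ)) * h by ring]
    have hsum := grid_sum hh0 m hm1
      (g := fun s => f (h * (⌊s / h⌋ : ℝ)) * (h * (m : ℝ) - h * (⌊s / h⌋ : ℝ)) ^ e)
      (c := fun k => a k * (((m : ℝ) - (k : ℝ)) * h) ^ e) hgc
    rw [show (m : ℝ) * h = h * (m : ℝ) from mul_comm _ _] at hsum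
    rw [hsum] at hH
    refine le_trans hH (le_of_eq ?_)
    have harr : A + C * ∑ k ∈ Finset.range (m - 1),
        (a (k + 1) * (((m : ℝ) - ((k + 1 : ℕ) : ℝ)) * h) ^ e) * h
        = A + ∑ j ∈ Finset.range (m - 1), a (m - 1 - j) * W (j + 1) := by
      congr 1
      rw [Finset.mul_sum, ← Finset.sum_range_reflect (fun j => a (m - 1 - j) * W (j + 1)) (m - 1)]
      refine Finset.sum_congr rfl fun k hk => ?_
      have hk' : k < m - 1 := Finset.mem_range.1 hk
      have e1 : m - 1 - (m - 1 - 1 - k) = k + 1 := by omega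
      have e2 : m - 1 - 1 - k + 1 = m - 1 - k := by omega
      have e3 : ((m - 1 - k : ℕ) : ℝ) = (m : ℝ) - ((k + 1 : ℕ) : ℝ) := by
        rw [show m - 1 - k = m - (k + 1) by omega, Nat.cast_sub (by omega)]
      simp only [e1, e2, hW_def]
      rw [e3]
      ring
    exact harr
  -- near window bound
  have hnear : ∑ j ∈ Finset.range r, W (j + 1) ≤ 1 / 2 := by
    have h1 : ∑ j ∈ Finset.range r, W (j + 1)
        = C * ∑ j ∈ Finset.range r, (((j : ℝ) + 1) * h) ^ e * h := by
      rw [Finset.mul_sum]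
      refine Finset.sum_congr rfl fun j _ => ?_
      simp only [hW_def]
      push_cast
      ring
    rw [h1]
    have h2 := sum_rpow_le hh0 he1 he2 r
    have h3 : ((r : ℝ) * h) ^ (e + 1) ≤ δ ^ (e + 1) :=
      Real.rpow_le_rpow (by positivity) hrh hp.le
    calc C * ∑ j ∈ Finset.range r, (((j : ℝ) + 1) * h) ^ e * h
        ≤ C * (((r : ℝ) * h) ^ (e + 1) / (e + 1)) := mul_le_mul_of_nonneg_left h2 hC.le
      _ ≤ C * (δ ^ (e + 1) / (e + 1)) :=
          mul_le_mul_of_nonneg_left ((div_le_div_iff_of_pos_right hp).2 h3) hC.le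
      _ = 1 / 2 := hδhalf
  -- far bound
  have hfar : ∀ j : ℕ, r + 1 ≤ j → W j ≤ C * h * δ ^ e := by
    intro j hj
    have hj' : δ ≤ (j : ℝ) * h := by
      have h1 : ((r : ℝ) + 1) ≤ (j : ℝ) := by exact_mod_cast hj
      have h1' : ((r : ℝ) + 1) * h ≤ (j : ℝ) * h := mul_le_mul_of_nonneg_right h1 hh0.le
      linarith
    have h2 : ((j : ℝ) * h) ^ e ≤ δ ^ e := Real.rpow_le_rpow_of_nonpos hδ hj' he2.le
    simp only [hW_def]
    calc C * (((j : ℝ) * h) ^ e * h) ≤ C * (δ ^ e * h) :=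
        mul_le_mul_of_nonneg_left (mul_le_mul_of_nonneg_right h2 hh0.le) hC.le
      _ = C * h * δ ^ e := by ring
  -- main induction on grid values
  have key : ∀ m : ℕ, 1 ≤ m → m ≤ n → a m ≤ A * E ^ (Q m) := by
    intro m
    induction m using Nat.strong_induction_on with
    | _ m IH =>
      intro hm1 hmn
      have hg := hgrid m hm1 hmn
      have hq1 : 1 ≤ Q m := hQ1 m hm1
      have hEq : (1 : ℝ) ≤ E ^ (Q m - 1) := one_le_pow₀ hE1
      rw [← Finset.sum_filter_add_sum_filter_not (Finset.range (m - 1)) (fun j => j < r)] at hg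
      have hnear_bound : ∑ j ∈ (Finset.range (m - 1)).filter (fun j => j < r),
          a (m - 1 - j) * W (j + 1) ≤ A * E ^ (Q m) * (1 / 2) := by
        have hstep : ∑ j ∈ (Finset.range (m - 1)).filter (fun j => j < r),
            a (m - 1 - j) * W (j + 1)
            ≤ ∑ j ∈ (Finset.range (m - 1)).filter (fun j => j < r),
              A * E ^ (Q m) * W (j + 1) := by
          refine Finset.sum_le_sum fun j hj => ?_
          have hj1 : j < m - 1 := Finset.mem_range.1 (Finset.mem_filter.1 hj).1
          have h1 : a (m - 1 - j) ≤ A * E ^ (Q (m - 1 - j)) :=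
            IH (m - 1 - j) (by omega) (by omega) (by omega)
          have h3 : A * E ^ (Q (m - 1 - j)) ≤ A * E ^ (Q m) :=
            mul_le_mul_of_nonneg_left
              (pow_le_pow_right₀ hE1 (hQmono _ _ (by omega))) hA
          exact mul_le_mul_of_nonneg_right (h1.trans h3) (hW0 _)
        refine hstep.trans ?_
        rw [← Finset.mul_sum]
        have hAE0 : 0 ≤ A * E ^ (Q m) := mul_nonneg hA (pow_nonneg hE0.le _)
        refine mul_le_mul_of_nonneg_left ?_ hAE0
        refine le_trans (Finset.sum_le_sum_of_subset_of_nonneg ?_ ?_) hnear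
        · intro j hj
          exact Finset.mem_range.2 (Finset.mem_filter.1 hj).2
        · intro j _ _
          exact hW0 _
      have hfar_bound : ∑ j ∈ (Finset.range (m - 1)).filter (fun j => ¬ j < r),
          a (m - 1 - j) * W (j + 1) ≤ A * E ^ (Q m - 1) * B := by
        have hterm0 : 0 ≤ A * E ^ (Q m - 1) := mul_nonneg hA (pow_nonneg hE0.le _)
        have hstep : ∑ j ∈ (Finset.range (m - 1)).filter (fun j => ¬ j < r),
            a (m - 1 - j) * W (j + 1)
            ≤ ∑ _j ∈ (Finset.range (m - 1)).filter (fun j => ¬ j < r),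
              A * E ^ (Q m - 1) * (C * h * δ ^ e) := by
          refine Finset.sum_le_sum fun j hj => ?_
          obtain ⟨hjr, hjnr⟩ := Finset.mem_filter.1 hj
          have hj1 : j < m - 1 := Finset.mem_range.1 hjr
          have hjr' : r ≤ j := by omega
          have h1 : a (m - 1 - j) ≤ A * E ^ (Q (m - 1 - j)) :=
            IH (m - 1 - j) (by omega) (by omega) (by omega)
          have h2 : Q (m - 1 - j) ≤ Q m - 1 := by
            have hs := hQsub m hm1
            have hle : Q (m - 1 - j) ≤ (m - 1) / (r + 1) := by
              simp only [hQ_def]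
              exact Nat.div_le_div_right (by omega)
            omega
          have h3 : A * E ^ (Q (m - 1 - j)) ≤ A * E ^ (Q m - 1) :=
            mul_le_mul_of_nonneg_left (pow_le_pow_right₀ hE1 h2) hA
          have h4 : W (j + 1) ≤ C * h * δ ^ e := hfar (j + 1) (by omega)
          exact mul_le_mul (h1.trans h3) h4 (hW0 _) hterm0
        refine hstep.trans ?_
        rw [Finset.sum_const, nsmul_eq_mul]
        have hcard : (((Finset.range (m - 1)).filter (fun j => ¬ j < r)).card : ℝ) ≤ (n : ℝ) := by
          have h5 : ((Finset.range (m - 1)).filter (fun j => ¬ j < r)).card ≤ n := by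
            refine le_trans (Finset.card_filter_le _ _) ?_
            rw [Finset.card_range]
            omega
          exact_mod_cast h5
        have hterm1 : 0 ≤ A * E ^ (Q m - 1) * (C * h * δ ^ e) :=
          mul_nonneg hterm0 (mul_nonneg (mul_nonneg hC.le hh0.le) hδe0)
        calc (((Finset.range (m - 1)).filter (fun j => ¬ j < r)).card : ℝ) *
            (A * E ^ (Q m - 1) * (C * h * δ ^ e))
            ≤ (n : ℝ) * (A * E ^ (Q m - 1) * (C * h * δ ^ e)) :=
              mul_le_mul_of_nonneg_right hcard hterm1
          _ = A * E ^ (Q m - 1) * (C * ((n : ℝ) * h) * δ ^ e) := by ring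
          _ = A * E ^ (Q m - 1) * B := by rw [hnh, hB_def]
      have hEpow : E ^ (Q m) = E ^ (Q m - 1) * E := by
        conv_lhs => rw [show Q m = (Q m - 1) + 1 by omega]
        rw [pow_succ]
      rw [hEpow] at hnear_bound ⊢
      have hP1 : A ≤ A * E ^ (Q m - 1) := le_mul_of_one_le_right hA hEq
      have hEE : A * (E ^ (Q m - 1) * E)
          = 2 * (A * E ^ (Q m - 1)) + 2 * (A * E ^ (Q m - 1) * B) := by
        rw [hE_def]; ring
      linarith only [hg, hnear_bound, hfar_bound, hP1, hEE]
  -- uniform grid bound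
  have hQn : Q n ≤ N := by
    have h1 : Q n ≤ n / (r + 1) + 1 := by
      simp only [hQ_def]
      calc (n + r) / (r + 1) ≤ (n + (r + 1)) / (r + 1) := Nat.div_le_div_right (by omega)
        _ = n / (r + 1) + 1 := Nat.add_div_right _ (Nat.succ_pos r)
    have h2 : n / (r + 1) ≤ Nat.floor (T / δ) := by
      apply Nat.le_floor
      have h3 : ((n / (r + 1) : ℕ) : ℝ) ≤ (n : ℝ) / (((r : ℕ) + 1 : ℕ) : ℝ) := Nat.cast_div_le
      refine h3.trans ?_
      rw [div_le_div_iff₀ (by positivity) hδ]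
      rw [← hnh]
      push_cast
      nlinarith [mul_le_mul_of_nonneg_left hrh2.le (Nat.cast_nonneg n : (0 : ℝ) ≤ (n : ℝ))]
    refine le_trans h1 ?_
    rw [hN_def]
    exact Nat.add_le_add_right h2 1
  have hgb : ∀ k : ℕ, 1 ≤ k → k ≤ n → a k ≤ A * K₀ := by
    intro k hk1 hkn
    refine (key k hk1 hkn).trans ?_
    rw [hK₀_def]
    exact mul_le_mul_of_nonneg_left
      (pow_le_pow_right₀ hE1 (le_trans (hQmono k n hkn) hQn)) hA
  -- final bound for arbitrary t
  intro t ht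
  obtain ⟨ht1, ht2⟩ := ht
  have htT : t - h ≤ T := by linarith
  have hth0 : 0 ≤ t - h := by linarith
  have hIoo : ∀ s ∈ Set.Ioo h t,
      f (h * (⌊s / h⌋ : ℝ)) * (t - h * (⌊s / h⌋ : ℝ)) ^ e ≤ (A * K₀) * (t - s) ^ e := by
    intro s hs
    have hs1 : h < s := hs.1
    have hs2 : s < t := hs.2
    have hk1 : 1 ≤ ⌊s / h⌋ := by
      refine Int.le_floor.2 ?_
      push_cast
      rw [le_div_iff₀ hh0]
      linarith
    have hkfl : ((⌊s / h⌋ : ℤ) : ℝ) ≤ s / h := Int.floor_le _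
    have hkh : h * ((⌊s / h⌋ : ℤ) : ℝ) ≤ s := by
      rw [mul_comm]
      calc ((⌊s / h⌋ : ℤ) : ℝ) * h ≤ (s / h) * h := mul_le_mul_of_nonneg_right hkfl hh0.le
        _ = s := by field_simp
    have hkn : ⌊s / h⌋ ≤ (n : ℤ) := by
      have h1 : ((⌊s / h⌋ : ℤ) : ℝ) ≤ (n : ℝ) := by
        refine hkfl.trans ?_
        rw [div_le_iff₀ hh0]
        calc s ≤ T := le_trans hs2.le ht2
          _ = (n : ℝ) * h := hnh.symm
      exact_mod_cast h1
    have hkt : ((⌊s / h⌋.toNat : ℕ) : ℝ) = ((⌊s / h⌋ : ℤ) : ℝ) := by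
      exact_mod_cast Int.toNat_of_nonneg (by omega)
    have hfb : f (h * ((⌊s / h⌋ : ℤ) : ℝ)) ≤ A * K₀ := by
      rw [← hkt]
      exact hgb ⌊s / h⌋.toNat (by omega) (by omega)
    have hker : (t - h * ((⌊s / h⌋ : ℤ) : ℝ)) ^ e ≤ (t - s) ^ e :=
      Real.rpow_le_rpow_of_nonpos (by linarith) (by linarith) he2.le
    have hker0 : 0 ≤ (t - h * ((⌊s / h⌋ : ℤ) : ℝ)) ^ e :=
      Real.rpow_nonneg (by linarith) e
    exact mul_le_mul hfb hker hker0 (mul_nonneg hA (le_trans zero_le_one hK₀1))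
  have hg2 : IntervalIntegrable (fun s => (A * K₀) * (t - s) ^ e) volume h t := by
    have h1 : IntervalIntegrable (fun x : ℝ => x ^ e) volume 0 (t - h) :=
      intervalIntegral.intervalIntegrable_rpow' he1
    have h2 := (h1.comp_sub_left t).const_mul (A * K₀)
    have h3 : IntervalIntegrable (fun s => (A * K₀) * (t - s) ^ e) volume (t - 0) (t - (t - h)) :=
      h2
    simpa using h3.symm
  have hval : (∫ s in h..t, (A * K₀) * (t - s) ^ e)
      = (A * K₀) * ((t - h) ^ (e + 1) / (e + 1)) := by
    rw [intervalIntegral.integral_const_mul]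
    congr 1
    rw [intervalIntegral.integral_comp_sub_left (fun x : ℝ => x ^ e) t]
    simp only [sub_self]
    rw [integral_rpow (Or.inl he1), Real.zero_rpow (by linarith : e + 1 ≠ 0)]
    ring
  have hIb : (∫ s in h..t, f (h * (⌊s / h⌋ : ℝ)) * (t - h * (⌊s / h⌋ : ℝ)) ^ e)
      ≤ (A * K₀) * ((t - h) ^ (e + 1) / (e + 1)) := by
    rw [← hval]
    rw [intervalIntegral.integral_of_le ht1, intervalIntegral.integral_of_le ht1]
    rw [MeasureTheory.integral_Ioc_eq_integral_Ioo, MeasureTheory.integral_Ioc_eq_integral_Ioo]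
    refine MeasureTheory.integral_mono_of_nonneg ?_ ?_ ?_
    · refine (ae_restrict_iff' measurableSet_Ioo).2 (Filter.Eventually.of_forall fun s hs => ?_)
      have hfl : ((⌊s / h⌋ : ℤ) : ℝ) ≤ s / h := Int.floor_le _
      have hkh : h * ((⌊s / h⌋ : ℤ) : ℝ) ≤ s := by
        rw [mul_comm]
        calc ((⌊s / h⌋ : ℤ) : ℝ) * h ≤ (s / h) * h := mul_le_mul_of_nonneg_right hfl hh0.le
          _ = s := by field_simp
      exact mul_nonneg (hf0 _) (Real.rpow_nonneg (by linarith [hs.2]) e)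
    · exact ((intervalIntegrable_iff_integrableOn_Ioc_of_le ht1).1 hg2).mono_set
        Set.Ioo_subset_Ioc_self
    · exact (ae_restrict_iff' measurableSet_Ioo).2 (Filter.Eventually.of_forall hIoo)
  have hH := H t ⟨ht1, ht2⟩
  have hTp : (t - h) ^ (e + 1) ≤ T ^ (e + 1) := Real.rpow_le_rpow hth0 htT hp.le
  calc f t ≤ A + C * ∫ s in h..t,
        f (h * (⌊s / h⌋ : ℝ)) * (t - h * (⌊s / h⌋ : ℝ)) ^ e := hH
    _ ≤ A + C * ((A * K₀) * ((t - h) ^ (e + 1) / (e + 1))) := by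
        exact add_le_add_right (mul_le_mul_of_nonneg_left hIb hC.le) A
    _ ≤ A + C * ((A * K₀) * (T ^ (e + 1) / (e + 1))) := by
        have hd : (t - h) ^ (e + 1) / (e + 1) ≤ T ^ (e + 1) / (e + 1) :=
          (div_le_div_iff_of_pos_right hp).2 hTp
        have h0 : 0 ≤ A * K₀ := mul_nonneg hA hK₀0.le
        exact add_le_add_right
          (mul_le_mul_of_nonneg_left (mul_le_mul_of_nonneg_left hd h0) hC.le) A
    _ = (1 + C * K₀ * (T ^ (e + 1) / (e + 1))) * A := by ring
end

section
/- Smoothing effect of a H\"older drift against the heat kernel gradient (Gaussian case): let \beta\in(0,1), b:\mathbb{R}^d\to\mathbb{R}^d bounded and \beta-H\"older, and let \mu be a probability measure on \mathbb{R}^d with density G satisfying G(z)\le K g_c(\sigma, z-x) and |G(z)-G(y)|\le K(|z-y|/\sigma^{1/2})^\beta (g_c(\sigma,z-x)+g_c(\sigma,y-x)) for all y,z. Then for any u>0 with \sigma \ge u and any \mathfrak{y}\in\mathbb{R}^d, \Big|\int G(z)\,b(z)\cdot\nabla_{\mathfrak y} p_2(u, \mathfrak y - z)\,dz\Big| \le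 C\, u^{(\beta-1)/2}\,(1+\sigma^{-\beta/2})\, g_{c'}(\sigma+u, \mathfrak y - x), for constants C, c'>c depending only on d, \beta, K, \|b\|_\infty and the H\"older constant of b. (Proof: cancellation G(z)b(z)-G(\mathfrak y)b(\mathfrak y), H\"older bounds, and the moment absorption |\mathfrak y - z|^\beta |\nabla p_2(u,\mathfrak y - z)| \le C u^{(\beta-1)/2} g_c(u,\mathfrak y-z).) -/
open MeasureTheory Real

/-- elementary: x * exp(-x/6) ≤ 3 for x ≥ 0 -/
lemma elem18 (x : ℝ) (hx : 0 ≤ x) : x * Real.exp (-x / 6) ≤ 3 := by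
  have h2 : Real.exp (x/6) = Real.exp (x/12) * Real.exp (x/12) := by
    rw [← Real.exp_add]; ring_nf
  have h3 : x/12 + 1 ≤ Real.exp (x/12) := Real.add_one_le_exp _
  have h4 : x ≤ 3 * Real.exp (x/6) := by
    rw [h2]; nlinarith [Real.exp_pos (x/12), sq_nonneg (x/12 - 1)]
  calc x * Real.exp (-x/6) = x / Real.exp (x/6) := by
        rw [neg_div, Real.exp_neg]; exact (div_eq_mul_inv x _).symm
    _ ≤ 3 := by rw [div_le_iff₀ (Real.exp_pos _)]; linarith

/-- scalar moment absorption -/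
lemma moment18 (q u t : ℝ) (hq0 : 0 ≤ q) (hq2 : q ≤ 2) (hu : 0 < u) (ht : 0 ≤ t) :
    t ^ q * Real.exp (-t ^ 2 / (2 * u)) ≤ 4 * u ^ (q / 2) * Real.exp (-t ^ 2 / (3 * u)) := by
  have hsplit : Real.exp (-t ^ 2 / (2 * u))
      = Real.exp (-t ^ 2 / (6 * u)) * Real.exp (-t ^ 2 / (3 * u)) := by
    rw [← Real.exp_add]; congr 1; field_simp; ring
  rw [hsplit, ← mul_assoc]
  refine mul_le_mul_of_nonneg_right ?_ (Real.exp_pos _).le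
  have hu2 : (0:ℝ) < u ^ (q/2) := Real.rpow_pos_of_pos hu _
  rcases le_or_gt (t^2) u with h | h
  · have h1 : t ^ q ≤ u ^ (q/2) := by
      have hts : t ≤ u ^ ((1:ℝ)/2) := by
        rw [← Real.sqrt_eq_rpow]
        exact (Real.le_sqrt ht hu.le).2 h
      calc t ^ q ≤ (u ^ ((1:ℝ)/2)) ^ q := Real.rpow_le_rpow ht hts hq0
        _ = u ^ (q/2) := by rw [← Real.rpow_mul hu.le]; ring_nf
    have h2 : Real.exp (-t ^ 2 / (6 * u)) ≤ 1 :=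
      Real.exp_le_one_iff.2 (div_nonpos_of_nonpos_of_nonneg (neg_nonpos.2 (by positivity))
        (by positivity))
    calc t ^ q * Real.exp (-t ^ 2 / (6 * u)) ≤ u ^ (q/2) * 1 :=
          mul_le_mul h1 h2 (Real.exp_pos _).le hu2.le
      _ ≤ 4 * u ^ (q/2) := by linarith
  · have ht2 : (1:ℝ) ≤ t^2/u := (one_le_div hu).2 h.le
    have h1 : t ^ q ≤ u ^ (q/2) * (t^2/u) := by
      have e1 : t ^ q = (t^2) ^ (q/2) := by
        rw [← Real.rpow_natCast t 2, ← Real.rpow_mul ht]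
        ring_nf
      have e2 : ((t^2:ℝ)) ^ (q/2) = u ^ (q/2) * (t^2/u) ^ (q/2) := by
        rw [← Real.mul_rpow hu.le (by positivity), mul_div_cancel₀ _ (ne_of_gt hu)]
      rw [e1, e2]
      refine mul_le_mul_of_nonneg_left ?_ (Real.rpow_nonneg hu.le _)
      calc (t^2/u) ^ (q/2) ≤ (t^2/u) ^ (1:ℝ) :=
            Real.rpow_le_rpow_of_exponent_le ht2 (by linarith)
        _ = t^2/u := Real.rpow_one _
    have h2 : (t^2/u) * Real.exp (-t ^ 2 / (6 * u)) ≤ 3 := by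
      have harg : Real.exp (-t ^ 2 / (6 * u)) = Real.exp (-(t^2/u) / 6) := by
        congr 1; ring
      rw [harg]
      exact elem18 _ (by positivity)
    calc t ^ q * Real.exp (-t ^ 2 / (6 * u))
        ≤ (u ^ (q/2) * (t^2/u)) * Real.exp (-t ^ 2 / (6 * u)) :=
          mul_le_mul_of_nonneg_right h1 (Real.exp_pos _).le
      _ = u ^ (q/2) * ((t^2/u) * Real.exp (-t ^ 2 / (6 * u))) := by ring
      _ ≤ u ^ (q/2) * 3 := mul_le_mul_of_nonneg_left h2 hu2.le
      _ ≤ 4 * u ^ (q/2) := by linarith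

/-- cross term absorption -/
lemma cross18 (c σ u a b r : ℝ) (hc : 1 ≤ c) (hσ : 0 < σ) (hu : 0 < u)
    (ha : 0 ≤ a) (hb : 0 ≤ b) (hr : 0 ≤ r) (hrab : r ≤ a + b) :
    r^2/(6*c*(σ+u)) + b^2/(6*u) ≤ a^2/(2*c*σ) + b^2/(3*u) := by
  have hc0 : (0:ℝ) < c := lt_of_lt_of_le one_pos hc
  have hd1 : (0:ℝ) < 4*c*σ := by positivity
  have hd2 : (0:ℝ) < 6*u := by positivity
  have hcs : (a+b)^2/(4*c*σ + 6*u) ≤ a^2/(4*c*σ) + b^2/(6*u) := by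
    rw [div_add_div _ _ (ne_of_gt hd1) (ne_of_gt hd2), div_le_div_iff₀ (by linarith) (by positivity)]
    nlinarith [sq_nonneg ((6*u)*a - (4*c*σ)*b)]
  have h1 : r^2/(6*c*(σ+u)) ≤ (a+b)^2/(4*c*σ + 6*u) := by
    apply div_le_div₀ (by positivity) (by nlinarith) (by positivity) (by nlinarith)
  have h2 : a^2/(4*c*σ) ≤ a^2/(2*c*σ) := by
    apply div_le_div_of_nonneg_left (by positivity) (by positivity) (by nlinarith)
  have hb2 : b^2/(6*u) + b^2/(6*u) = b^2/(3*u) := by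
    field_simp; ring
  linarith

variable {d : ℕ}

local notation "E" => EuclideanSpace ℝ (Fin d)

/-- gradient of the Gaussian kernel -/
lemma gradP18 (A u : ℝ) (hu : 0 < u) (w : E) :
    HasGradientAt (fun z : E => A * Real.exp (-‖z‖ ^ 2 / (2 * u)))
      ((-(A * Real.exp (-‖w‖ ^ 2 / (2 * u))) / u) • w) w := by
  have h1 : HasFDerivAt (fun z : E => ‖z‖ ^ 2) ((2:ℝ) • innerSL ℝ w) w := by
    have := (hasStrictFDerivAt_norm_sq w).hasFDerivAt
    rwa [(by ext y; simp : ((2:ℕ) • innerSL ℝ w : E →L[ℝ] ℝ) = (2:ℝ) • innerSL ℝ w)] at this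
  have h2 : HasFDerivAt (fun z : E => -‖z‖ ^ 2 / (2 * u))
      ((-(2*u)⁻¹) • ((2:ℝ) • innerSL ℝ w)) w := by
    have := h1.const_mul (-(2*u)⁻¹)
    exact this.congr_of_eventuallyEq (Filter.Eventually.of_forall fun z => by ring)
  have h3 := (h2.exp).const_mul A
  rw [hasGradientAt_iff_hasFDerivAt]
  convert h3 using 1
  rfl
  ext y
  simp only [InnerProductSpace.toDual_apply_apply, ContinuousLinearMap.smul_apply, innerSL_apply_apply,
    smul_eq_mul, real_inner_smul_left]
  field_simp

lemma integrable_gauss18 (v : ℝ) (hv : 0 < v) (y : E) :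
    Integrable (fun z : E => Real.exp (-‖y - z‖ ^ 2 / v)) := by
  have h0 : Integrable (fun w : E => Real.exp (-(1/v) * ‖w‖ ^ 2)) := by
    have hc := GaussianFourier.integrable_cexp_neg_mul_sq_norm_add
      (b := (((1/v : ℝ)) : ℂ)) (by rw [Complex.ofReal_re]; positivity) 0 (0 : E)
    have hn := hc.norm
    refine hn.congr ?_
    filter_upwards with w
    have harg : (-(((1/v:ℝ)):ℂ) * (‖w‖:ℂ)^2 + 0 * (((inner ℝ (0:E) w : ℝ)) : ℂ))
        = (((-(1/v) * ‖w‖^2 : ℝ)):ℂ) := by push_cast; ring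
    rw [harg, Complex.norm_exp, Complex.ofReal_re]
  have h1 : Integrable (fun w : E => Real.exp (-‖w‖ ^ 2 / v)) := by
    refine h0.congr ?_
    filter_upwards with w
    congr 1; ring
  exact h1.comp_sub_left y

lemma integral_gauss18 (v : ℝ) (hv : 0 < v) (y : E) :
    ∫ z : E, Real.exp (-‖y - z‖ ^ 2 / v) = (π * v) ^ ((d:ℝ) / 2) := by
  rw [integral_sub_left_eq_self (fun w : E => Real.exp (-‖w‖ ^ 2 / v)) volume y]
  have h : ∀ w : E, Real.exp (-‖w‖ ^ 2 / v) = Real.exp (-(1/v) * ‖w‖ ^ 2) := by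
    intro w; congr 1; ring
  simp_rw [h]
  rw [GaussianFourier.integral_rexp_neg_mul_sq_norm (by positivity)]
  rw [finrank_euclideanSpace_fin]
  congr 1
  field_simp

lemma zeroint18 (A u : ℝ) (y v : E) :
    ∫ z : E, (-(A * Real.exp (-‖y - z‖ ^ 2 / (2*u))) / u) * (inner ℝ v (y - z) : ℝ) = 0 := by
  have h1 := integral_sub_left_eq_self
    (fun w : E => (-(A * Real.exp (-‖w‖ ^ 2 / (2*u))) / u) * (inner ℝ v w : ℝ)) volume y
  rw [h1]
  have h2 := integral_neg_eq_self
    (fun w : E => (-(A * Real.exp (-‖w‖ ^ 2 / (2*u))) / u) * (inner ℝ v w : ℝ)) volume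
  simp only [norm_neg, inner_neg_right, mul_neg] at h2
  rw [integral_neg] at h2
  linarith

set_option maxHeartbeats 2000000 in
/-- Smoothing effect of a Hölder drift against the heat kernel gradient
(Gaussian case). -/
theorem stmt18 (d : ℕ) (hd : 1 ≤ d) (β : ℝ) (hβ0 : 0 < β) (hβ1 : β < 1)
    (c : ℝ) (hc : 1 ≤ c) (K M L : ℝ) (hK : 1 ≤ K) (hM : 0 < M) (hL : 0 < L)
    (p₂ : ℝ → EuclideanSpace ℝ (Fin d) → ℝ)
    (hp₂ : ∀ u : ℝ, 0 < u → ∀ z, p₂ u z =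
      (2 * π * u) ^ (-(d : ℝ) / 2) * Real.exp (-‖z‖ ^ 2 / (2 * u)))
    (g : ℝ → ℝ → EuclideanSpace ℝ (Fin d) → ℝ)
    (hg : ∀ c' v : ℝ, 0 < c' → 0 < v → ∀ z, g c' v z =
      (2 * π * c' * v) ^ (-(d : ℝ) / 2) * Real.exp (-‖z‖ ^ 2 / (2 * c' * v))) :
    ∃ C : ℝ, 0 < C ∧ ∃ c' : ℝ, c < c' ∧
      ∀ (b : EuclideanSpace ℝ (Fin d) → EuclideanSpace ℝ (Fin d)),
        (∀ z, ‖b z‖ ≤ M) →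
        (∀ z y, ‖b z - b y‖ ≤ L * ‖z - y‖ ^ β) →
        ∀ (G : EuclideanSpace ℝ (Fin d) → ℝ) (x : EuclideanSpace ℝ (Fin d)) (σ : ℝ),
          0 < σ →
          (∀ z, 0 ≤ G z) →
          (∫ z, G z) = 1 →
          (∀ z, G z ≤ K * g c σ (z - x)) →
          (∀ z y, |G z - G y| ≤
            K * (‖z - y‖ / σ ^ ((1 : ℝ) / 2)) ^ β *
              (g c σ (z - x) + g c σ (y - x))) →
          ∀ u : ℝ, 0 < u → u ≤ σ → ∀ 𝔶 : EuclideanSpace ℝ (Fin d),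
            |∫ z, G z * (inner ℝ (b z) (gradient (p₂ u) (𝔶 - z)) : ℝ)| ≤
              C * u ^ ((β - 1) / 2) * (1 + σ ^ (-β / 2)) *
                g c' (σ + u) (𝔶 - x) := by
  have hc0 : (0:ℝ) < c := lt_of_lt_of_le one_pos hc
  have hK0 : (0:ℝ) < K := lt_of_lt_of_le one_pos hK
  refine ⟨8 * 18 ^ ((d:ℝ)/2) * K * (M + L), by positivity, 3*c, by linarith, ?_⟩
  intro b hb hbH G x σ hσ hG0 _hG1 hGle hGH u hu huσ 𝔶
  set A : ℝ := (2 * π * u) ^ (-(d : ℝ) / 2) with hA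
  set P : EuclideanSpace ℝ (Fin d) → ℝ := fun w => A * Real.exp (-‖w‖ ^ 2 / (2 * u)) with hP
  have hPeq : p₂ u = P := funext fun z => hp₂ u hu z
  rw [hPeq]
  have hApos : (0:ℝ) < A := Real.rpow_pos_of_pos (by positivity) _
  have hPdef : ∀ w : EuclideanSpace ℝ (Fin d), P w = A * Real.exp (-‖w‖ ^ 2 / (2 * u)) :=
    fun w => rfl
  have hPpos : ∀ w : EuclideanSpace ℝ (Fin d), 0 < P w := fun w => by
    rw [hPdef w]; positivity
  have hgrad : ∀ w : EuclideanSpace ℝ (Fin d), gradient P w = (-(P w) / u) • w :=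
    fun w => (gradP18 A u hu w).gradient
  set Aσ : ℝ := (2 * π * c * σ) ^ (-(d : ℝ) / 2) with hAσ
  have hAσpos : (0:ℝ) < Aσ := Real.rpow_pos_of_pos (by positivity) _
  have hgσ : ∀ w : EuclideanSpace ℝ (Fin d),
      g c σ w = Aσ * Real.exp (-‖w‖ ^ 2 / (2 * c * σ)) := fun w => hg c σ hc0 hσ w
  have hgpos : ∀ w : EuclideanSpace ℝ (Fin d), 0 < g c σ w := fun w => by
    rw [hgσ w]; positivity
  set F : EuclideanSpace ℝ (Fin d) → ℝ :=
    fun z => G z * (inner ℝ (b z) (gradient P (𝔶 - z)) : ℝ) with hF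
  set H : EuclideanSpace ℝ (Fin d) → ℝ :=
    fun z => G 𝔶 * (inner ℝ (b 𝔶) (gradient P (𝔶 - z)) : ℝ) with hH
  -- continuity facts
  have hnormt : ∀ y : EuclideanSpace ℝ (Fin d),
      Filter.Tendsto (fun z : EuclideanSpace ℝ (Fin d) => ‖z - y‖) (nhds y) (nhds 0) := by
    intro y
    have := ((continuous_id.sub (continuous_const (y := y))).norm).tendsto y
    simpa using this
  have hrc : ContinuousAt (fun t : ℝ => t ^ β) 0 :=
    Real.continuousAt_rpow_const 0 β (Or.inr hβ0.le)
  have hbcont : Continuous b := by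
    rw [continuous_iff_continuousAt]
    intro y
    have h2 : Filter.Tendsto (fun z : EuclideanSpace ℝ (Fin d) => L * ‖z - y‖ ^ β)
        (nhds y) (nhds 0) := by
      have h3 := (hrc.tendsto.comp (hnormt y)).const_mul L
      simpa [Real.zero_rpow (ne_of_gt hβ0)] using h3
    have h4 : Filter.Tendsto (fun z => b z - b y) (nhds y) (nhds 0) :=
      squeeze_zero_norm (fun z => hbH z y) h2
    exact tendsto_sub_nhds_zero_iff.1 h4
  have hgb : ∀ w : EuclideanSpace ℝ (Fin d), g c σ w ≤ Aσ := fun w => by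
    rw [hgσ w]
    calc Aσ * Real.exp (-‖w‖ ^ 2 / (2 * c * σ)) ≤ Aσ * 1 := by
          refine mul_le_mul_of_nonneg_left ?_ hAσpos.le
          exact Real.exp_le_one_iff.2 (div_nonpos_of_nonpos_of_nonneg
            (neg_nonpos.2 (by positivity)) (by positivity))
      _ = Aσ := mul_one _
  have hGcont : Continuous G := by
    rw [continuous_iff_continuousAt]
    intro y
    have hDb : ∀ z : EuclideanSpace ℝ (Fin d),
        |G z - G y| ≤ (K * 2 * Aσ / (σ ^ ((1:ℝ)/2)) ^ β) * ‖z - y‖ ^ β := by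
      intro z
      have h0 := hGH z y
      have he : (‖z - y‖ / σ ^ ((1:ℝ)/2)) ^ β = ‖z - y‖ ^ β / (σ ^ ((1:ℝ)/2)) ^ β :=
        Real.div_rpow (norm_nonneg _) (Real.rpow_nonneg hσ.le _) β
      rw [he] at h0
      have hσβ : (0:ℝ) < (σ ^ ((1:ℝ)/2)) ^ β :=
        Real.rpow_pos_of_pos (Real.rpow_pos_of_pos hσ _) _
      have hsum : g c σ (z - x) + g c σ (y - x) ≤ 2 * Aσ := by
        have h5 := hgb (z - x); have h6 := hgb (y - x); linarith
      calc |G z - G y| ≤ K * (‖z - y‖ ^ β / (σ ^ ((1:ℝ)/2)) ^ β)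
            * (g c σ (z - x) + g c σ (y - x)) := h0
        _ ≤ K * (‖z - y‖ ^ β / (σ ^ ((1:ℝ)/2)) ^ β) * (2 * Aσ) := by
            refine mul_le_mul_of_nonneg_left hsum ?_
            positivity
        _ = (K * 2 * Aσ / (σ ^ ((1:ℝ)/2)) ^ β) * ‖z - y‖ ^ β := by
            field_simp
    have h2 : Filter.Tendsto
        (fun z : EuclideanSpace ℝ (Fin d) => (K * 2 * Aσ / (σ ^ ((1:ℝ)/2)) ^ β) * ‖z - y‖ ^ β)
        (nhds y) (nhds 0) := by
      have h3 := (hrc.tendsto.comp (hnormt y)).const_mul (K * 2 * Aσ / (σ ^ ((1:ℝ)/2)) ^ β)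
      simpa [Real.zero_rpow (ne_of_gt hβ0)] using h3
    have h4 : Filter.Tendsto (fun z => G z - G y) (nhds y) (nhds 0) :=
      squeeze_zero_norm (fun z => by rw [Real.norm_eq_abs]; exact hDb z) h2
    exact tendsto_sub_nhds_zero_iff.1 h4
  have hPcont : Continuous P := by
    rw [hP]; fun_prop
  have hVcont : Continuous (fun z : EuclideanSpace ℝ (Fin d) => gradient P (𝔶 - z)) := by
    have hre : (fun z : EuclideanSpace ℝ (Fin d) => gradient P (𝔶 - z))
        = fun z => (-(P (𝔶 - z)) / u) • (𝔶 - z) := funext fun z => hgrad (𝔶 - z)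
    rw [hre]
    exact (((hPcont.comp (continuous_const.sub continuous_id)).neg).div_const u).smul
      (continuous_const.sub continuous_id)
  have hFcont : Continuous F := hGcont.mul (hbcont.inner hVcont)
  have hHcont : Continuous H := continuous_const.mul (continuous_const.inner hVcont)
  -- norm of the gradient
  have hN : ∀ w : EuclideanSpace ℝ (Fin d), ‖gradient P w‖ = P w / u * ‖w‖ := by
    intro w
    rw [hgrad w, norm_smul, Real.norm_eq_abs, abs_div, abs_neg, abs_of_pos (hPpos w),
      abs_of_pos hu]
  -- moment bounds
  have hmom : ∀ w : EuclideanSpace ℝ (Fin d), ‖w‖ ^ β * ‖gradient P w‖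
      ≤ 4 * A * u ^ ((β-1)/2) * Real.exp (-‖w‖ ^ 2 / (3 * u)) := by
    intro w
    rw [hN w]
    have h1 : ‖w‖ ^ β * (P w / u * ‖w‖)
        = (A/u) * (‖w‖ ^ (β+1) * Real.exp (-‖w‖ ^ 2 / (2 * u))) := by
      rw [Real.rpow_add' (norm_nonneg w) (by linarith : β + 1 ≠ 0), Real.rpow_one, hPdef w]
      ring
    rw [h1]
    have h2 := moment18 (β+1) u ‖w‖ (by linarith) (by linarith) hu (norm_nonneg w)
    have hup : u ^ ((β+1)/2) = u ^ ((β-1)/2) * u := by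
      rw [show (β+1)/2 = (β-1)/2 + 1 by ring, Real.rpow_add hu, Real.rpow_one]
    calc (A/u) * (‖w‖ ^ (β+1) * Real.exp (-‖w‖ ^ 2 / (2 * u)))
        ≤ (A/u) * (4 * u ^ ((β+1)/2) * Real.exp (-‖w‖ ^ 2 / (3 * u))) :=
          mul_le_mul_of_nonneg_left h2 (by positivity)
      _ = 4 * A * u ^ ((β-1)/2) * Real.exp (-‖w‖ ^ 2 / (3 * u)) := by
          rw [hup]; field_simp
  have hNb : ∀ w : EuclideanSpace ℝ (Fin d), ‖gradient P w‖
      ≤ (A/u) * (4 * u ^ ((1:ℝ)/2)) * Real.exp (-‖w‖ ^ 2 / (3 * u)) := by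
    intro w
    rw [hN w]
    have h2 := moment18 1 u ‖w‖ zero_le_one one_le_two hu (norm_nonneg w)
    rw [Real.rpow_one] at h2
    have h1 : P w / u * ‖w‖ = (A/u) * (‖w‖ * Real.exp (-‖w‖ ^ 2 / (2 * u))) := by
      rw [hPdef w]; ring
    rw [h1]
    calc (A/u) * (‖w‖ * Real.exp (-‖w‖ ^ 2 / (2 * u)))
        ≤ (A/u) * (4 * u ^ ((1:ℝ)/2) * Real.exp (-‖w‖ ^ 2 / (3 * u))) :=
          mul_le_mul_of_nonneg_left h2 (by positivity)
      _ = (A/u) * (4 * u ^ ((1:ℝ)/2)) * Real.exp (-‖w‖ ^ 2 / (3 * u)) := by ring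
  -- integrability
  have hint3 : Integrable (fun z : EuclideanSpace ℝ (Fin d) =>
      Real.exp (-‖𝔶 - z‖ ^ 2 / (3*u))) := integrable_gauss18 (3*u) (by positivity) 𝔶
  have hint6 : Integrable (fun z : EuclideanSpace ℝ (Fin d) =>
      Real.exp (-‖𝔶 - z‖ ^ 2 / (6*u))) := integrable_gauss18 (6*u) (by positivity) 𝔶
  have hGb : ∀ z : EuclideanSpace ℝ (Fin d), G z ≤ K * Aσ := fun z =>
    (hGle z).trans (mul_le_mul_of_nonneg_left (hgb (z - x)) hK0.le)
  have hmaj : ∀ z : EuclideanSpace ℝ (Fin d), ∀ G0 : ℝ, 0 ≤ G0 → G0 ≤ K * Aσ →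
      ∀ v : EuclideanSpace ℝ (Fin d), ‖v‖ ≤ M →
      ‖G0 * (inner ℝ v (gradient P (𝔶 - z)) : ℝ)‖
        ≤ (K * Aσ * M * ((A/u) * (4 * u ^ ((1:ℝ)/2)))) * Real.exp (-‖𝔶 - z‖ ^ 2 / (3*u)) := by
    intro z G0 hG00 hG0b v hv
    rw [Real.norm_eq_abs, abs_mul, abs_of_nonneg hG00]
    have hi : |(inner ℝ v (gradient P (𝔶 - z)) : ℝ)| ≤ M * ‖gradient P (𝔶 - z)‖ :=
      (abs_real_inner_le_norm _ _).trans
        (mul_le_mul_of_nonneg_right hv (norm_nonneg _))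
    calc G0 * |(inner ℝ v (gradient P (𝔶 - z)) : ℝ)|
        ≤ (K * Aσ) * (M * ‖gradient P (𝔶 - z)‖) :=
          mul_le_mul hG0b hi (abs_nonneg _) (by positivity)
      _ ≤ (K * Aσ) * (M * ((A/u) * (4 * u ^ ((1:ℝ)/2)) * Real.exp (-‖𝔶 - z‖ ^ 2 / (3*u)))) := by
          refine mul_le_mul_of_nonneg_left (mul_le_mul_of_nonneg_left (hNb _) hM.le) ?_
          positivity
      _ = (K * Aσ * M * ((A/u) * (4 * u ^ ((1:ℝ)/2)))) * Real.exp (-‖𝔶 - z‖ ^ 2 / (3*u)) := by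
          ring
  have hFint : Integrable F := by
    refine Integrable.mono' (hint3.const_mul (K * Aσ * M * ((A/u) * (4 * u ^ ((1:ℝ)/2)))))
      hFcont.aestronglyMeasurable (Filter.Eventually.of_forall fun z => ?_)
    exact hmaj z (G z) (hG0 z) (hGb z) (b z) (hb z)
  have hHint : Integrable H := by
    refine Integrable.mono' (hint3.const_mul (K * Aσ * M * ((A/u) * (4 * u ^ ((1:ℝ)/2)))))
      hHcont.aestronglyMeasurable (Filter.Eventually.of_forall fun z => ?_)
    exact hmaj z (G 𝔶) (hG0 𝔶) (hGb 𝔶) (b 𝔶) (hb 𝔶)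
  -- vanishing integral of H
  have hHzero : ∫ z, H z = 0 := by
    have hre : ∀ z : EuclideanSpace ℝ (Fin d), H z
        = G 𝔶 * ((-(A * Real.exp (-‖𝔶 - z‖ ^ 2 / (2*u))) / u) * (inner ℝ (b 𝔶) (𝔶 - z) : ℝ)) := by
      intro z
      rw [hH]
      simp only
      rw [hgrad (𝔶 - z), real_inner_smul_right, hPdef (𝔶 - z)]
    simp_rw [hre]
    rw [integral_const_mul, zeroint18 A u 𝔶 (b 𝔶), mul_zero]
  -- the pointwise key bound
  set Θ : ℝ := 4 * A * u ^ ((β-1)/2) * (K * (2 * M * σ ^ (-β/2) + L)) * Aσ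
      * Real.exp (-‖𝔶 - x‖ ^ 2 / (6 * c * (σ + u))) with hΘ
  have e36 : ∀ w : EuclideanSpace ℝ (Fin d),
      Real.exp (-‖w‖ ^ 2 / (3*u)) ≤ Real.exp (-‖w‖ ^ 2 / (6*u)) := by
    intro w
    apply Real.exp_le_exp.2
    rw [neg_div, neg_div, neg_le_neg_iff]
    exact div_le_div_of_nonneg_left (by positivity) (by positivity) (by linarith)
  have hgycross : g c σ (𝔶 - x) ≤ Aσ * Real.exp (-‖𝔶 - x‖ ^ 2 / (6 * c * (σ + u))) := by
    rw [hgσ (𝔶 - x)]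
    refine mul_le_mul_of_nonneg_left ?_ hAσpos.le
    apply Real.exp_le_exp.2
    rw [neg_div, neg_div, neg_le_neg_iff]
    exact div_le_div_of_nonneg_left (by positivity) (by positivity) (by nlinarith)
  have hzcross : ∀ z : EuclideanSpace ℝ (Fin d),
      g c σ (z - x) * Real.exp (-‖𝔶 - z‖ ^ 2 / (3*u))
      ≤ Aσ * Real.exp (-‖𝔶 - x‖ ^ 2 / (6 * c * (σ + u))) * Real.exp (-‖𝔶 - z‖ ^ 2 / (6*u)) := by
    intro z
    rw [hgσ (z - x)]
    have hAr : Aσ * Real.exp (-‖z - x‖ ^ 2 / (2 * c * σ)) * Real.exp (-‖𝔶 - z‖ ^ 2 / (3*u))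
        = Aσ * Real.exp ((-‖z - x‖ ^ 2 / (2 * c * σ)) + (-‖𝔶 - z‖ ^ 2 / (3*u))) := by
      rw [Real.exp_add]; ring
    have hAr2 : Aσ * Real.exp (-‖𝔶 - x‖ ^ 2 / (6 * c * (σ + u)))
          * Real.exp (-‖𝔶 - z‖ ^ 2 / (6*u))
        = Aσ * Real.exp ((-‖𝔶 - x‖ ^ 2 / (6 * c * (σ + u))) + (-‖𝔶 - z‖ ^ 2 / (6*u))) := by
      rw [Real.exp_add]; ring
    rw [hAr, hAr2]
    refine mul_le_mul_of_nonneg_left (Real.exp_le_exp.2 ?_) hAσpos.le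
    have htri : ‖𝔶 - x‖ ≤ ‖z - x‖ + ‖𝔶 - z‖ := by
      calc ‖𝔶 - x‖ = ‖(𝔶 - z) + (z - x)‖ := by rw [sub_add_sub_cancel]
        _ ≤ ‖𝔶 - z‖ + ‖z - x‖ := norm_add_le _ _
        _ = ‖z - x‖ + ‖𝔶 - z‖ := by ring
    have hcr := cross18 c σ u ‖z - x‖ ‖𝔶 - z‖ ‖𝔶 - x‖ hc hσ hu (norm_nonneg _)
      (norm_nonneg _) (norm_nonneg _) htri
    have e1 : (-‖z - x‖ ^ 2 / (2 * c * σ) : ℝ) = -(‖z - x‖ ^ 2 / (2 * c * σ)) := by ring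
    have e2 : (-‖𝔶 - z‖ ^ 2 / (3 * u) : ℝ) = -(‖𝔶 - z‖ ^ 2 / (3 * u)) := by ring
    have e3 : (-‖𝔶 - x‖ ^ 2 / (6 * c * (σ + u)) : ℝ)
        = -(‖𝔶 - x‖ ^ 2 / (6 * c * (σ + u))) := by ring
    have e4 : (-‖𝔶 - z‖ ^ 2 / (6 * u) : ℝ) = -(‖𝔶 - z‖ ^ 2 / (6 * u)) := by ring
    rw [e1, e2, e3, e4]
    linarith
  have key : ∀ z : EuclideanSpace ℝ (Fin d),
      |F z - H z| ≤ Θ * Real.exp (-‖𝔶 - z‖ ^ 2 / (6*u)) := by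
    intro z
    have hgz0 := (hgpos (z - x)).le
    have hgy0 := (hgpos (𝔶 - x)).le
    have hbnβ : (0:ℝ) ≤ ‖𝔶 - z‖ ^ β := Real.rpow_nonneg (norm_nonneg _) _
    have hdecomp : F z - H z = (G z - G 𝔶) * (inner ℝ (b z) (gradient P (𝔶 - z)) : ℝ)
        + G 𝔶 * (inner ℝ (b z - b 𝔶) (gradient P (𝔶 - z)) : ℝ) := by
      simp only [hF, hH, inner_sub_left]; ring
    have hi1 : |(inner ℝ (b z) (gradient P (𝔶 - z)) : ℝ)| ≤ M * ‖gradient P (𝔶 - z)‖ :=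
      (abs_real_inner_le_norm _ _).trans
        (mul_le_mul_of_nonneg_right (hb z) (norm_nonneg _))
    have hi2 : |(inner ℝ (b z - b 𝔶) (gradient P (𝔶 - z)) : ℝ)|
        ≤ (L * ‖𝔶 - z‖ ^ β) * ‖gradient P (𝔶 - z)‖ := by
      refine (abs_real_inner_le_norm _ _).trans
        (mul_le_mul_of_nonneg_right ?_ (norm_nonneg _))
      have h0 := hbH z 𝔶
      rwa [norm_sub_rev z 𝔶] at h0
    have hGz : |G z - G 𝔶| ≤ K * σ ^ (-β/2) * ‖𝔶 - z‖ ^ β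
        * (g c σ (z - x) + g c σ (𝔶 - x)) := by
      have h0 := hGH z 𝔶
      have he : (‖z - 𝔶‖ / σ ^ ((1:ℝ)/2)) ^ β = σ ^ (-β/2) * ‖𝔶 - z‖ ^ β := by
        rw [norm_sub_rev z 𝔶, Real.div_rpow (norm_nonneg _) (Real.rpow_nonneg hσ.le _)]
        have h1 : ((σ ^ ((1:ℝ)/2)) ^ β : ℝ) = σ ^ (β/2) := by
          rw [← Real.rpow_mul hσ.le, show (1:ℝ)/2*β = β/2 by ring]
        have h2 : σ ^ (-β/2) = (σ ^ (β/2))⁻¹ := by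
          rw [show (-β/2 : ℝ) = -(β/2) by ring, Real.rpow_neg hσ.le]
        rw [h1, h2, div_eq_mul_inv, mul_comm]
      rw [he] at h0
      calc |G z - G 𝔶| ≤ K * (σ ^ (-β/2) * ‖𝔶 - z‖ ^ β)
            * (g c σ (z - x) + g c σ (𝔶 - x)) := h0
        _ = K * σ ^ (-β/2) * ‖𝔶 - z‖ ^ β * (g c σ (z - x) + g c σ (𝔶 - x)) := by ring
    have hstep1 : |F z - H z| ≤ (K * (M * σ ^ (-β/2) * (g c σ (z - x) + g c σ (𝔶 - x))
        + L * g c σ (𝔶 - x))) * (‖𝔶 - z‖ ^ β * ‖gradient P (𝔶 - z)‖) := by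
      rw [hdecomp]
      have t1 : |(G z - G 𝔶) * (inner ℝ (b z) (gradient P (𝔶 - z)) : ℝ)|
          ≤ (K * σ ^ (-β/2) * ‖𝔶 - z‖ ^ β * (g c σ (z - x) + g c σ (𝔶 - x)))
            * (M * ‖gradient P (𝔶 - z)‖) := by
        rw [abs_mul]
        refine mul_le_mul hGz hi1 (abs_nonneg _) ?_
        have h7 : (0:ℝ) ≤ K * σ ^ (-β/2) * ‖𝔶 - z‖ ^ β := by positivity
        exact mul_nonneg h7 (by linarith)
      have t2 : |G 𝔶 * (inner ℝ (b z - b 𝔶) (gradient P (𝔶 - z)) : ℝ)|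
          ≤ (K * g c σ (𝔶 - x)) * ((L * ‖𝔶 - z‖ ^ β) * ‖gradient P (𝔶 - z)‖) := by
        rw [abs_mul, abs_of_nonneg (hG0 𝔶)]
        refine mul_le_mul (hGle 𝔶) hi2 (abs_nonneg _) ?_
        exact mul_nonneg hK0.le hgy0
      calc |(G z - G 𝔶) * (inner ℝ (b z) (gradient P (𝔶 - z)) : ℝ)
            + G 𝔶 * (inner ℝ (b z - b 𝔶) (gradient P (𝔶 - z)) : ℝ)|
          ≤ |(G z - G 𝔶) * (inner ℝ (b z) (gradient P (𝔶 - z)) : ℝ)|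
            + |G 𝔶 * (inner ℝ (b z - b 𝔶) (gradient P (𝔶 - z)) : ℝ)| := abs_add_le _ _
        _ ≤ (K * σ ^ (-β/2) * ‖𝔶 - z‖ ^ β * (g c σ (z - x) + g c σ (𝔶 - x)))
            * (M * ‖gradient P (𝔶 - z)‖)
            + (K * g c σ (𝔶 - x)) * ((L * ‖𝔶 - z‖ ^ β) * ‖gradient P (𝔶 - z)‖) :=
            add_le_add t1 t2
        _ = (K * (M * σ ^ (-β/2) * (g c σ (z - x) + g c σ (𝔶 - x))
            + L * g c σ (𝔶 - x))) * (‖𝔶 - z‖ ^ β * ‖gradient P (𝔶 - z)‖) := by ring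
    have hQ0 : (0:ℝ) ≤ K * (M * σ ^ (-β/2) * (g c σ (z - x) + g c σ (𝔶 - x))
        + L * g c σ (𝔶 - x)) := by
      refine mul_nonneg hK0.le (add_nonneg (mul_nonneg (by positivity) (by linarith))
        (mul_nonneg hL.le hgy0))
    have hstep2 : |F z - H z| ≤ (K * (M * σ ^ (-β/2) * (g c σ (z - x) + g c σ (𝔶 - x))
        + L * g c σ (𝔶 - x))) * (4 * A * u ^ ((β-1)/2) * Real.exp (-‖𝔶 - z‖ ^ 2 / (3 * u))) :=
      hstep1.trans (mul_le_mul_of_nonneg_left (hmom (𝔶 - z)) hQ0)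
    have hb1 := hzcross z
    have hb2 : g c σ (𝔶 - x) * Real.exp (-‖𝔶 - z‖ ^ 2 / (3*u))
        ≤ Aσ * Real.exp (-‖𝔶 - x‖ ^ 2 / (6 * c * (σ + u))) * Real.exp (-‖𝔶 - z‖ ^ 2 / (6*u)) :=
      mul_le_mul hgycross (e36 (𝔶 - z)) (Real.exp_pos _).le (by positivity)
    have hsplit2 : (K * (M * σ ^ (-β/2) * (g c σ (z - x) + g c σ (𝔶 - x))
        + L * g c σ (𝔶 - x))) * (4 * A * u ^ ((β-1)/2) * Real.exp (-‖𝔶 - z‖ ^ 2 / (3 * u)))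
        = 4 * A * u ^ ((β-1)/2) * K
          * (M * σ ^ (-β/2) * (g c σ (z - x) * Real.exp (-‖𝔶 - z‖ ^ 2 / (3 * u)))
            + M * σ ^ (-β/2) * (g c σ (𝔶 - x) * Real.exp (-‖𝔶 - z‖ ^ 2 / (3 * u)))
            + L * (g c σ (𝔶 - x) * Real.exp (-‖𝔶 - z‖ ^ 2 / (3 * u)))) := by ring
    have hmono : 4 * A * u ^ ((β-1)/2) * K
          * (M * σ ^ (-β/2) * (g c σ (z - x) * Real.exp (-‖𝔶 - z‖ ^ 2 / (3 * u)))
            + M * σ ^ (-β/2) * (g c σ (𝔶 - x) * Real.exp (-‖𝔶 - z‖ ^ 2 / (3 * u)))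
            + L * (g c σ (𝔶 - x) * Real.exp (-‖𝔶 - z‖ ^ 2 / (3 * u))))
        ≤ 4 * A * u ^ ((β-1)/2) * K
          * (M * σ ^ (-β/2) * (Aσ * Real.exp (-‖𝔶 - x‖ ^ 2 / (6 * c * (σ + u)))
              * Real.exp (-‖𝔶 - z‖ ^ 2 / (6*u)))
            + M * σ ^ (-β/2) * (Aσ * Real.exp (-‖𝔶 - x‖ ^ 2 / (6 * c * (σ + u)))
              * Real.exp (-‖𝔶 - z‖ ^ 2 / (6*u)))
            + L * (Aσ * Real.exp (-‖𝔶 - x‖ ^ 2 / (6 * c * (σ + u)))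
              * Real.exp (-‖𝔶 - z‖ ^ 2 / (6*u)))) := by
      refine mul_le_mul_of_nonneg_left ?_ (by positivity)
      refine add_le_add (add_le_add ?_ ?_) ?_
      · exact mul_le_mul_of_nonneg_left hb1 (by positivity)
      · exact mul_le_mul_of_nonneg_left hb2 (by positivity)
      · exact mul_le_mul_of_nonneg_left hb2 hL.le
    calc |F z - H z| ≤ _ := hstep2
      _ = _ := hsplit2
      _ ≤ _ := hmono
      _ = Θ * Real.exp (-‖𝔶 - z‖ ^ 2 / (6*u)) := by rw [hΘ]; ring
  -- assemble
  have hswap : ∫ z, F z = ∫ z, (F z - H z) := by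
    rw [integral_sub hFint hHint, hHzero, sub_zero]
  rw [hswap]
  have habs : |∫ z, (F z - H z)| ≤ ∫ z, |F z - H z| := by
    simpa [Real.norm_eq_abs] using
      norm_integral_le_integral_norm (μ := volume) (fun z => F z - H z)
  have hintmono : ∫ z, |F z - H z| ≤ ∫ z, Θ * Real.exp (-‖𝔶 - z‖ ^ 2 / (6*u)) :=
    integral_mono (hFint.sub hHint).abs (hint6.const_mul Θ) key
  have hintval : ∫ z, Θ * Real.exp (-‖𝔶 - z‖ ^ 2 / (6*u))
      = Θ * (π * (6*u)) ^ ((d:ℝ)/2) := by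
    rw [integral_const_mul, integral_gauss18 (6*u) (by positivity) 𝔶]
  -- final scalar estimate
  set B : ℝ := (2 * π * (3*c) * (σ + u)) ^ (-(d : ℝ) / 2) with hB
  have hBpos : (0:ℝ) < B := Real.rpow_pos_of_pos (by positivity) _
  have hgT : g (3*c) (σ + u) (𝔶 - x)
      = B * Real.exp (-‖𝔶 - x‖ ^ 2 / (6 * c * (σ + u))) := by
    rw [hg (3*c) (σ + u) (by positivity) (by positivity),
      show (2 * (3*c) * (σ + u) : ℝ) = 6 * c * (σ + u) by ring]
  have h3e : A * (π * (6*u)) ^ ((d:ℝ)/2) = 3 ^ ((d:ℝ)/2) := by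
    rw [hA, show (-(d:ℝ)/2) = -((d:ℝ)/2) by ring, Real.rpow_neg (by positivity),
      inv_mul_eq_div, ← Real.div_rpow (by positivity) (by positivity),
      show (π * (6*u)) / (2 * π * u) = (3:ℝ) by rw [div_eq_iff (by positivity)]; ring]
  have hAσB : Aσ ≤ 6 ^ ((d:ℝ)/2) * B := by
    have hX : (0:ℝ) < 2 * π * c * σ := by positivity
    have hY : (0:ℝ) < 2 * π * (3*c) * (σ + u) := by positivity
    have h1 : (2 * π * (3*c) * (σ + u)) ^ ((d:ℝ)/2)
        ≤ (6:ℝ) ^ ((d:ℝ)/2) * (2 * π * c * σ) ^ ((d:ℝ)/2) := by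
      rw [← Real.mul_rpow (by norm_num) hX.le]
      exact Real.rpow_le_rpow hY.le (by nlinarith) (by positivity)
    rw [hAσ, hB, show (-(d:ℝ)/2) = -((d:ℝ)/2) by ring, Real.rpow_neg hX.le,
      Real.rpow_neg hY.le, ← one_div, ← div_eq_mul_inv,
      div_le_div_iff₀ (Real.rpow_pos_of_pos hX _) (Real.rpow_pos_of_pos hY _), one_mul]
    exact h1
  have hKc : K * (2 * M * σ ^ (-β/2) + L) ≤ 2 * K * (M + L) * (1 + σ ^ (-β/2)) := by
    nlinarith [mul_pos hK0 hM, mul_pos hK0 hL,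
      mul_nonneg (mul_nonneg hK0.le hL.le) (Real.rpow_nonneg hσ.le (-β/2)),
      mul_nonneg (mul_nonneg hK0.le hM.le) (Real.rpow_nonneg hσ.le (-β/2)),
      Real.rpow_nonneg hσ.le (-β/2)]
  have hfinal : Θ * (π * (6*u)) ^ ((d:ℝ)/2)
      ≤ 8 * 18 ^ ((d:ℝ)/2) * K * (M + L) * u ^ ((β - 1) / 2) * (1 + σ ^ (-β / 2))
        * g (3*c) (σ + u) (𝔶 - x) := by
    have hE60 : (0:ℝ) ≤ Real.exp (-‖𝔶 - x‖ ^ 2 / (6 * c * (σ + u))) := (Real.exp_pos _).le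
    have hstep : 4 * (A * (π * (6*u)) ^ ((d:ℝ)/2)) * Aσ * (K * (2 * M * σ ^ (-β/2) + L))
        ≤ 4 * 3 ^ ((d:ℝ)/2) * (6 ^ ((d:ℝ)/2) * B) * (2 * K * (M + L) * (1 + σ ^ (-β/2))) := by
      rw [h3e]
      refine mul_le_mul ?_ hKc ?_ ?_
      · exact mul_le_mul_of_nonneg_left hAσB (by positivity)
      · positivity
      · positivity
    calc Θ * (π * (6*u)) ^ ((d:ℝ)/2)
        = (u ^ ((β-1)/2) * Real.exp (-‖𝔶 - x‖ ^ 2 / (6 * c * (σ + u))))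
          * (4 * (A * (π * (6*u)) ^ ((d:ℝ)/2)) * Aσ * (K * (2 * M * σ ^ (-β/2) + L))) := by
          rw [hΘ]; ring
      _ ≤ (u ^ ((β-1)/2) * Real.exp (-‖𝔶 - x‖ ^ 2 / (6 * c * (σ + u))))
          * (4 * 3 ^ ((d:ℝ)/2) * (6 ^ ((d:ℝ)/2) * B) * (2 * K * (M + L) * (1 + σ ^ (-β/2)))) :=
          mul_le_mul_of_nonneg_left hstep (by positivity)
      _ = 8 * 18 ^ ((d:ℝ)/2) * K * (M + L) * u ^ ((β - 1) / 2) * (1 + σ ^ (-β / 2))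
          * (B * Real.exp (-‖𝔶 - x‖ ^ 2 / (6 * c * (σ + u)))) := by
          rw [show ((18:ℝ)) = 3 * 6 by norm_num,
            Real.mul_rpow (by norm_num) (by norm_num)]
          ring
      _ = _ := by rw [hgT]
  calc |∫ z, (F z - H z)| ≤ ∫ z, |F z - H z| := habs
    _ ≤ ∫ z, Θ * Real.exp (-‖𝔶 - z‖ ^ 2 / (6*u)) := hintmono
    _ = Θ * (π * (6*u)) ^ ((d:ℝ)/2) := hintval
    _ ≤ _ := hfinal
end
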